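/- The space PSAP_{ω,r}(X) is translation invariant on ℝ⁺: if u ∈ PSAP_{ω,r}(X) and s ≥ 0, then the function ρ ↦ u(ρ + s) also belongs to PSAP_{ω,r}(X). -/

import Mathlib

open MeasureTheory Filter Set

/-- `u ∈ PSAP_{ω,r}(X)`: pseudo S-asymptotically ω-periodic of class r. -/
def PSAPclass {X : Type*} [NormedAddCommGroup X] (ω r : ℝ) (u : ℝ → X) : Prop :=
  Tendsto (fun T : ℝ => (1 / T) * ∫ s in r..T, ⨆ τ ∈ Set.Icc (s - r) s, ‖u (τ + ω) - u τ‖)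
    atTop (nhds 0)

/-- Lemma 2.2: `PSAP_{ω,r}(X)` is translation invariant on ℝ⁺. -/
theorem psapClass_translation_invariant {X : Type*} [NormedAddCommGroup X]
    (r ω s : ℝ) (hr : 0 < r) (hω : 0 < ω) (hs : 0 ≤ s)
    (u : ℝ → X)
    (hcont : ContinuousOn u (Set.Ici 0)) (hbdd : ∃ B, ∀ t ≥ (0:ℝ), ‖u t‖ ≤ B)
    (h : PSAPclass ω r u) :
    PSAPclass ω r (fun ρ => u (ρ + s)) := by
  obtain ⟨B, hB⟩ := hbdd
  -- continuous extension of `u`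
  set v : ℝ → X := fun t => u (max t 0) with hv_def
  have hv : Continuous v :=
    hcont.comp_continuous (continuous_id.max continuous_const) (fun x => le_max_right x 0)
  have hvu : ∀ t : ℝ, 0 ≤ t → v t = u t := fun t ht => by
    simp only [hv_def, max_eq_left ht]
  set g : ℝ → ℝ := fun τ => ‖v (τ + ω) - v τ‖ with hg_def
  have hg : Continuous g := ((hv.comp (continuous_add_right ω)).sub hv).norm
  set F : ℝ → ℝ := fun σ => sSup ((fun p => g (σ + p)) '' Icc (-r) 0) with hF_def
  have hFcont : Continuous F :=
    IsCompact.continuous_sSup (f := fun σ p => g (σ + p)) isCompact_Icc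
      (hg.comp (continuous_fst.add continuous_snd))
  -- the key pointwise identity
  have key : ∀ c : ℝ, 0 ≤ c → ∀ σ : ℝ, r ≤ σ →
      (⨆ τ ∈ Icc (σ - r) σ, ‖u (τ + ω + c) - u (τ + c)‖) = F (σ + c) := by
    intro c hc σ hσ
    have hσ0 : 0 ≤ σ - r := by linarith
    set h' : ℝ → ℝ := fun τ => ‖u (τ + ω + c) - u (τ + c)‖ with hh'
    have himg : (fun p => g (σ + c + p)) '' Icc (-r) 0 = h' '' Icc (σ - r) σ := by
      have h1 : Icc (σ - r) σ = (fun p => σ + p) '' Icc (-r) 0 := by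
        rw [Set.image_const_add_Icc]
        ring_nf
      rw [h1, Set.image_image]
      apply Set.image_congr
      intro p hp
      obtain ⟨hp1, hp2⟩ := hp
      have hτ0 : 0 ≤ σ + p := by linarith
      simp only [hh', hg_def]
      rw [hvu _ (by linarith), hvu _ (by linarith)]
      ring_nf
    have hbdd' : BddAbove (Set.range fun i : (Icc (σ - r) σ) => h' i) := by
      refine ⟨B + B, ?_⟩
      rintro x ⟨⟨τ, hτ1, hτ2⟩, rfl⟩
      exact (norm_sub_le _ _).trans
        (add_le_add (hB _ (by dsimp; linarith)) (hB _ (by dsimp; linarith)))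
    have hmem : σ ∈ Icc (σ - r) σ := ⟨by linarith, le_refl σ⟩
    have hsup0 : sSup (∅ : Set ℝ) ≤ ⨆ i : (Icc (σ - r) σ), h' i := by
      rw [Real.sSup_empty]
      exact le_trans (norm_nonneg _) (le_ciSup hbdd' ⟨σ, hmem⟩)
    have : sSup (h' '' Icc (σ - r) σ) = ⨆ τ ∈ Icc (σ - r) σ, h' τ :=
      csSup_image hbdd' hsup0
    rw [hF_def]
    dsimp only
    rw [himg, this]
  -- integrability of F
  have hInt : ∀ a b : ℝ, IntervalIntegrable F MeasureTheory.volume a b :=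
    fun a b => hFcont.intervalIntegrable a b
  -- rewrite the hypothesis using F
  have hEq1 : (fun T : ℝ => (1 / T) * ∫ σ in r..T,
        ⨆ τ ∈ Set.Icc (σ - r) σ, ‖u (τ + ω) - u τ‖) =ᶠ[atTop]
      (fun T : ℝ => (1 / T) * ∫ σ in r..T, F σ) := by
    filter_upwards [eventually_ge_atTop r] with T hT
    congr 1
    apply intervalIntegral.integral_congr
    intro σ hσ
    rw [Set.uIcc_of_le hT] at hσ
    have := key 0 le_rfl σ hσ.1
    simp only [add_zero] at this
    exact this
  have hF0 : Tendsto (fun T : ℝ => (1 / T) * ∫ σ in r..T, F σ) atTop (nhds 0) :=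
    h.congr' hEq1
  -- limit pieces
  set C : ℝ := ∫ σ in r..(r + s), F σ with hC
  have t1 : Tendsto (fun T : ℝ => (1 / (T + s)) * ∫ σ in r..(T + s), F σ) atTop (nhds 0) :=
    hF0.comp (tendsto_atTop_add_const_right atTop s tendsto_id)
  have t2 : Tendsto (fun T : ℝ => (T + s) / T) atTop (nhds 1) := by
    have h1 : Tendsto (fun T : ℝ => 1 + s * T⁻¹) atTop (nhds (1 + s * 0)) :=
      tendsto_const_nhds.add (tendsto_const_nhds.mul tendsto_inv_atTop_zero)
    rw [mul_zero, add_zero] at h1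
    apply h1.congr'
    filter_upwards [eventually_gt_atTop (0:ℝ)] with T hT
    field_simp
  have t3 : Tendsto (fun T : ℝ => (1 / T) * C) atTop (nhds 0) := by
    have := tendsto_inv_atTop_zero.mul_const C
    rw [zero_mul] at this
    simpa [one_div] using this
  have tmain : Tendsto (fun T : ℝ =>
      ((T + s) / T) * ((1 / (T + s)) * ∫ σ in r..(T + s), F σ) - (1 / T) * C)
      atTop (nhds 0) := by
    have := (t2.mul t1).sub t3
    rw [mul_zero, sub_zero] at this
    exact this
  -- conclude
  unfold PSAPclass
  apply tmain.congr'
  filter_upwards [eventually_ge_atTop r] with T hT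
  have hT0 : (0:ℝ) < T := lt_of_lt_of_le hr hT
  have hTs : (0:ℝ) < T + s := by linarith
  have e1 : (∫ σ in r..T, ⨆ τ ∈ Set.Icc (σ - r) σ,
      ‖(fun ρ => u (ρ + s)) (τ + ω) - (fun ρ => u (ρ + s)) τ‖) = ∫ σ in r..T, F (σ + s) := by
    apply intervalIntegral.integral_congr
    intro σ hσ
    rw [Set.uIcc_of_le hT] at hσ
    have := key s hs σ hσ.1
    simpa using this
  have e2 : (∫ σ in r..T, F (σ + s)) = ∫ σ in (r + s)..(T + s), F σ :=
    intervalIntegral.integral_comp_add_right F s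
  have e3 : (∫ σ in (r + s)..(T + s), F σ) = (∫ σ in r..(T + s), F σ) - C :=
    (intervalIntegral.integral_interval_sub_left (hInt r (T + s)) (hInt r (r + s))).symm
  rw [e1, e2, e3]
  field_simp
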